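/- Let A : X → Y and B, C : Y → X be bounded linear operators satisfying A(BA)² = ABACA = ACABA = (AC)²A, and let Q be a polynomial. Then ABA maps the range of Q(CA − I) into the range of Q(AB − I), and ABA maps the kernel of Q(CA − I) into the kernel of Q(AB − I). -/

import Mathlib

open Polynomial ContinuousLinearMap

variable {X Y : Type*} [NormedAddCommGroup X] [NormedSpace ℂ X] [CompleteSpace X]
  [NormedAddCommGroup Y] [NormedSpace ℂ Y] [CompleteSpace Y]

lemma intertwine_aeval {X Y : Type*} [NormedAddCommGroup X] [NormedSpace ℂ X]
    [NormedAddCommGroup Y] [NormedSpace ℂ Y]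
    (T : Y →L[ℂ] Y) (U : X →L[ℂ] X) (S : X →L[ℂ] Y)
    (h : T ∘L S = S ∘L U) (p : ℂ[X]) :
    (Polynomial.aeval T p) ∘L S = S ∘L (Polynomial.aeval U p) := by
  have hpow : ∀ n : ℕ, (T ^ n) ∘L S = S ∘L (U ^ n) := by
    intro n
    induction n with
    | zero => simp [ContinuousLinearMap.one_def]
    | succ k ih =>
        rw [pow_succ, pow_succ]
        calc (T ^ k * T) ∘L S = (T ^ k) ∘L (T ∘L S) := by
              rw [ContinuousLinearMap.mul_def, ContinuousLinearMap.comp_assoc]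
          _ = ((T ^ k) ∘L S) ∘L U := by rw [h, ContinuousLinearMap.comp_assoc]
          _ = (S ∘L (U ^ k)) ∘L U := by rw [ih]
          _ = S ∘L (U ^ k * U) := by
              rw [ContinuousLinearMap.mul_def, ContinuousLinearMap.comp_assoc]
  induction p using Polynomial.induction_on' with
  | add p q hp hq =>
      simp only [map_add, ContinuousLinearMap.add_comp, ContinuousLinearMap.comp_add, hp, hq]
  | monomial n a =>
      simp only [aeval_monomial, Algebra.algebraMap_eq_smul_one, smul_one_mul,
        ContinuousLinearMap.smul_comp, ContinuousLinearMap.comp_smul, hpow n]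

theorem stmt2 (A : X →L[ℂ] Y) (B C : Y →L[ℂ] X)
    (h1 : A ∘L B ∘L A ∘L B ∘L A = A ∘L B ∘L A ∘L C ∘L A)
    (h2 : A ∘L B ∘L A ∘L C ∘L A = A ∘L C ∘L A ∘L B ∘L A)
    (h3 : A ∘L C ∘L A ∘L B ∘L A = A ∘L C ∘L A ∘L C ∘L A) (Q : ℂ[X]) :
    (∀ x : X, x ∈ LinearMap.range (Polynomial.aeval (C ∘L A - 1) Q : X →ₗ[ℂ] X) →
      (A ∘L B ∘L A) x ∈ LinearMap.range (Polynomial.aeval (A ∘L B - 1) Q : Y →ₗ[ℂ] Y)) ∧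
    (∀ x : X, x ∈ LinearMap.ker (Polynomial.aeval (C ∘L A - 1) Q : X →ₗ[ℂ] X) →
      (A ∘L B ∘L A) x ∈ LinearMap.ker (Polynomial.aeval (A ∘L B - 1) Q : Y →ₗ[ℂ] Y)) := by
  have key : (A ∘L B - 1) ∘L (A ∘L B ∘L A) = (A ∘L B ∘L A) ∘L (C ∘L A - 1) := by
    ext x
    simp only [ContinuousLinearMap.sub_comp, ContinuousLinearMap.comp_sub, ContinuousLinearMap.one_def, ContinuousLinearMap.id_comp, ContinuousLinearMap.comp_id, coe_sub', Pi.sub_apply, comp_apply]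
    have := congrArg (fun f => f x) h1
    simp only [comp_apply] at this ⊢
    rw [this]
  have main := intertwine_aeval (A ∘L B - 1) (C ∘L A - 1) (A ∘L B ∘L A) key Q
  constructor
  · rintro x ⟨y, rfl⟩
    exact ⟨(A ∘L B ∘L A) y, by
      have := congrArg (fun f => f y) main
      simpa using this⟩
  · intro x hx
    rw [LinearMap.mem_ker] at hx ⊢
    have := congrArg (fun f => f x) main
    simp only [comp_apply] at this
    simp only [comp_apply, ContinuousLinearMap.coe_coe] at hx ⊢
    rw [this, hx]; simp
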